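/- arXiv:2506.00795 — 3 statements merged into one kernel-verified Lean document; each statement's English description precedes it below -/
import Mathlib

section
/- Let Q_max = max_i Q(i). For every selection function q⋆ : ℝ → ℝ such that for each m ∈ (0,1), q⋆(m) is a global minimizer of L_m over ℝ, the function q⋆ tends to Q_max as m tends to 1 from the left (i.e., Tendsto q⋆ (𝓝[<] 1 restricted to (0,1)) (𝓝 Q_max)). -/
/-- The expectile regression loss `L_m(q) = ∑ i, w_i(q) · (Q i − q)²`, where
`w_i(q) = m` if `Q i ≥ q` and `w_i(q) = 1 − m` otherwise (Eq. (7) of the paper). -/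
noncomputable def expectileLoss (n : ℕ) (Q : Fin n → ℝ) (m q : ℝ) : ℝ :=
  ∑ i, (if q ≤ Q i then m else 1 - m) * (Q i - q) ^ 2

/-- **Theorem 2.** Any selection `q⋆ : ℝ → ℝ` of global minimizers of the expectile
loss `L_m` (for `m ∈ (0,1)`) tends to `Q_max = max_i Q i` as `m → 1⁻` within `(0,1)`. -/
theorem expectile_minimizer_tendsto_max
    (n : ℕ) (hn : 0 < n) (Q : Fin n → ℝ)
    (qstar : ℝ → ℝ)
    (hmin : ∀ m ∈ Set.Ioo (0 : ℝ) 1, ∀ q : ℝ,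
      expectileLoss n Q m (qstar m) ≤ expectileLoss n Q m q) :
    Filter.Tendsto qstar (nhdsWithin 1 (Set.Ioo (0 : ℝ) 1))
      (nhds (Finset.univ.sup' (Finset.univ_nonempty_iff.mpr ⟨⟨0, hn⟩⟩) Q)) := by
  have hne : (Finset.univ : Finset (Fin n)).Nonempty := Finset.univ_nonempty_iff.mpr ⟨⟨0, hn⟩⟩
  set M : ℝ := Finset.univ.sup' hne Q with hMdef
  obtain ⟨i₀, -, hi₀⟩ := Finset.exists_mem_eq_sup' hne Q
  have hle : ∀ i, Q i ≤ M := fun i => Finset.le_sup' Q (Finset.mem_univ i)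
  set C : ℝ := ∑ i : Fin n, (Q i - M) ^ 2 with hCdef
  have hC0 : 0 ≤ C := Finset.sum_nonneg fun i _ => sq_nonneg _
  -- upper bound for loss at M
  have hLM : ∀ m ∈ Set.Ioo (0 : ℝ) 1, expectileLoss n Q m M ≤ (1 - m) * C := by
    intro m hm
    rw [hCdef, Finset.mul_sum, expectileLoss]
    apply Finset.sum_le_sum
    intro i _
    by_cases h : M ≤ Q i
    · have hQ : Q i = M := le_antisymm (hle i) h
      simp [hQ]
    · simp [h]
  -- the minimizer never exceeds M
  have hqle : ∀ m ∈ Set.Ioo (0 : ℝ) 1, qstar m ≤ M := by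
    intro m hm
    by_contra h
    push_neg at h
    have hlt : expectileLoss n Q m M < expectileLoss n Q m (qstar m) := by
      rw [expectileLoss, expectileLoss]
      apply Finset.sum_lt_sum_of_nonempty hne
      intro i _
      have hQi : Q i ≤ M := hle i
      have hnot : ¬ (qstar m ≤ Q i) := by
        push_neg; exact lt_of_le_of_lt hQi h
      rw [if_neg hnot]
      by_cases hMi : M ≤ Q i
      · have hQ : Q i = M := le_antisymm hQi hMi
        rw [if_pos hMi, hQ]
        have h1m : 0 < 1 - m := by linarith [hm.2]
        have h0 : 0 < qstar m - M := by linarith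
        have hsq : 0 < (qstar m - M) ^ 2 := pow_pos h0 2
        nlinarith
      · rw [if_neg hMi]
        have h1m : 0 < 1 - m := by linarith [hm.2]
        have hQlt : Q i < M := lt_of_le_of_ne hQi (fun he => hMi (le_of_eq he.symm))
        have hfac : 0 < (qstar m - M) * (qstar m + M - 2 * Q i) :=
          mul_pos (by linarith) (by linarith)
        have hsq2 : (Q i - M) ^ 2 < (Q i - qstar m) ^ 2 := by nlinarith
        exact mul_lt_mul_of_pos_left hsq2 h1m
    exact absurd (hmin m hm M) (not_le.mpr hlt)
  -- key estimate
  have hkey : ∀ m ∈ Set.Ioo (0 : ℝ) 1, m * (M - qstar m) ^ 2 ≤ (1 - m) * C := by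
    intro m hm
    have hq : qstar m ≤ M := hqle m hm
    have hMi₀ : M = Q i₀ := hi₀
    have hterm : m * (M - qstar m) ^ 2 ≤ expectileLoss n Q m (qstar m) := by
      rw [expectileLoss]
      have hcond : qstar m ≤ Q i₀ := hMi₀ ▸ hq
      have hb : m * (M - qstar m) ^ 2
          = (if qstar m ≤ Q i₀ then m else 1 - m) * (Q i₀ - qstar m) ^ 2 := by
        rw [if_pos hcond, hMi₀]
      rw [hb]
      exact Finset.single_le_sum (f := fun i =>
        (if qstar m ≤ Q i then m else 1 - m) * (Q i - qstar m) ^ 2)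
        (fun i _ => by
          have h1m : 0 ≤ 1 - m := by linarith [hm.2]
          have hm0 : 0 ≤ m := le_of_lt hm.1
          by_cases h : qstar m ≤ Q i <;> simp [h] <;> positivity)
        (Finset.mem_univ i₀)
    exact le_trans hterm (le_trans (hmin m hm M) (hLM m hm))
  -- conclude via metric characterization
  rw [Metric.tendsto_nhdsWithin_nhds]
  intro ε hε
  refine ⟨min (1 / 2) (ε ^ 2 / (2 * (C + 1))), by positivity, ?_⟩
  intro m hm hdist
  have hm1 : m < 1 := hm.2
  have hdist' : 1 - m < min (1 / 2) (ε ^ 2 / (2 * (C + 1))) := by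
    rw [Real.dist_eq, abs_of_neg (by linarith : m - 1 < 0)] at hdist
    linarith
  have h1 : 1 - m < 1 / 2 := lt_of_lt_of_le hdist' (min_le_left _ _)
  have h2 : 1 - m < ε ^ 2 / (2 * (C + 1)) := lt_of_lt_of_le hdist' (min_le_right _ _)
  have hq : qstar m ≤ M := hqle m hm
  have hk := hkey m hm
  rw [Real.dist_eq, abs_of_nonpos (by linarith : qstar m - M ≤ 0)]
  by_contra hcon
  push_neg at hcon
  have hεq : ε ≤ M - qstar m := by linarith
  have hsq : ε ^ 2 ≤ (M - qstar m) ^ 2 := by nlinarith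
  have hmhalf : 1 / 2 < m := by linarith
  have hCC : (1 - m) * C < ε ^ 2 / 2 := by
    have hC1 : (0:ℝ) < C + 1 := by linarith
    have hmul := mul_lt_mul_of_pos_right h2 hC1
    have he : ε ^ 2 / (2 * (C + 1)) * (C + 1) = ε ^ 2 / 2 := by
      field_simp
    rw [he] at hmul
    nlinarith
  nlinarith [mul_le_mul_of_nonneg_left hsq (le_of_lt hm.1), mul_pos hε hε]
end

section
/- If 0 < m₁ < m₂ < 1, q₁ is a global minimizer of L_{m₁} over ℝ, and q₂ is a global minimizer of L_{m₂} over ℝ, then q₁ ≤ q₂ (monotonicity of the expectile-regression minimizer in the expectile level m). -/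
private lemma expectileLoss_rep (n : ℕ) (Q : Fin n → ℝ) (m q : ℝ) :
    expectileLoss n Q m q =
      (1/2) * (∑ i, (Q i - q) ^ 2) + (1/2 - m) * (∑ i, (q - Q i) * |q - Q i|) := by
  unfold expectileLoss
  rw [Finset.mul_sum, Finset.mul_sum, ← Finset.sum_add_distrib]
  refine Finset.sum_congr rfl fun i _ => ?_
  by_cases h : q ≤ Q i
  · rw [if_pos h, abs_of_nonpos (by linarith)]; ring
  · rw [if_neg h, abs_of_nonneg (by linarith [not_le.1 h])]; ring

private lemma mul_abs_strictMono : StrictMono (fun x : ℝ => x * |x|) := by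
  intro a b hab
  rcases abs_cases a with ⟨h1, h2⟩ | ⟨h1, h2⟩ <;>
    rcases abs_cases b with ⟨h3, h4⟩ | ⟨h3, h4⟩ <;>
    simp only [h1, h3] <;> nlinarith

/-- Monotonicity of the expectile-regression minimizer in the expectile level:
if `0 < m₁ < m₂ < 1` and `q₁`, `q₂` are global minimizers of `L_{m₁}`, `L_{m₂}`
respectively, then `q₁ ≤ q₂`. -/
theorem expectile_minimizer_mono
    (n : ℕ) (hn : 0 < n) (Q : Fin n → ℝ)
    (m₁ m₂ : ℝ) (hm₁ : 0 < m₁) (hm₁₂ : m₁ < m₂) (hm₂ : m₂ < 1)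
    (q₁ q₂ : ℝ)
    (hq₁ : ∀ q : ℝ, expectileLoss n Q m₁ q₁ ≤ expectileLoss n Q m₁ q)
    (hq₂ : ∀ q : ℝ, expectileLoss n Q m₂ q₂ ≤ expectileLoss n Q m₂ q) :
    q₁ ≤ q₂ := by
  by_contra hlt
  push_neg at hlt
  set g : ℝ → ℝ := fun q => ∑ i, (q - Q i) * |q - Q i| with hg
  have hA := hq₁ q₂
  have hB := hq₂ q₁
  rw [expectileLoss_rep, expectileLoss_rep] at hA hB
  -- from the two optimality inequalities: (m₂ - m₁) * (g q₁ - g q₂) ≤ 0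
  have key : (m₂ - m₁) * (g q₁ - g q₂) ≤ 0 := by
    simp only [hg] at *
    nlinarith [hA, hB]
  have hle : g q₁ ≤ g q₂ := by
    by_contra h6
    push_neg at h6
    nlinarith [mul_pos (sub_pos.2 hm₁₂) (sub_pos.2 h6)]
  -- but g is strictly increasing, contradiction with q₂ < q₁
  have hgt : g q₂ < g q₁ := by
    apply Finset.sum_lt_sum_of_nonempty
    · exact Finset.univ_nonempty_iff.2 (Fin.pos_iff_nonempty.1 hn)
    · intro i _
      exact mul_abs_strictMono (by linarith : q₂ - Q i < q₁ - Q i)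
  linarith
end

section
/- For every m ∈ (0,1), every global minimizer q of L_m over ℝ satisfies q ≤ max_i Q(i). In particular, the predicted maximal Q-value obtained by expectile regression never exceeds the largest Q-value supported by the offline dataset (no out-of-distribution overestimation). -/
/-- No out-of-distribution overestimation: for every `m ∈ (0,1)`, every global
minimizer `q` of the expectile loss `L_m` satisfies `q ≤ max_i Q i`. -/
theorem expectile_minimizer_le_max
    (n : ℕ) (hn : 0 < n) (Q : Fin n → ℝ)
    (m : ℝ) (hm : m ∈ Set.Ioo (0 : ℝ) 1)
    (q : ℝ) (hq : ∀ q' : ℝ, expectileLoss n Q m q ≤ expectileLoss n Q m q') :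
    q ≤ Finset.univ.sup' (Finset.univ_nonempty_iff.mpr ⟨⟨0, hn⟩⟩) Q := by
  set ne : (Finset.univ : Finset (Fin n)).Nonempty := Finset.univ_nonempty_iff.mpr ⟨⟨0, hn⟩⟩
  set M := Finset.univ.sup' ne Q with hM
  by_contra h
  push_neg at h
  have hle : ∀ i, Q i ≤ M := fun i => Finset.le_sup' Q (Finset.mem_univ i)
  have hlt : expectileLoss n Q m M < expectileLoss n Q m q := by
    unfold expectileLoss
    apply Finset.sum_lt_sum_of_nonempty ne
    intro i _
    have hQq : ¬ q ≤ Q i := not_le.mpr ((hle i).trans_lt h)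
    rw [if_neg hQq]
    have h1m : 0 < 1 - m := by linarith [hm.2]
    by_cases hMQ : M ≤ Q i
    · rw [if_pos hMQ]
      have : Q i = M := le_antisymm (hle i) hMQ
      rw [this]
      have hne : M - q ≠ 0 := by linarith
      have : (0:ℝ) < (M - q)^2 := by positivity
      nlinarith
    · rw [if_neg hMQ]
      push_neg at hMQ
      have : (Q i - M)^2 < (Q i - q)^2 := by nlinarith [hle i, h]
      nlinarith
  exact absurd (hq M) (not_le.mpr hlt)
end
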